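/- Let f : ℝⁿ → ℝ be differentiable, μ-strongly convex and L-smooth with 0 < μ ≤ L, and let x* be a global minimizer of f. Set β = (√L − √μ)/(√L + √μ). Define Nesterov's constant-step iterates by y_0 = x_0, x_{k+1} = y_k − (1/L)∇f(y_k), and y_{k+1} = x_{k+1} + β(x_{k+1} − x_k). Then for every k ≥ 0, f(x_k) − f(x*) ≤ (1 − √(μ/L))^k · (f(x_0) − f(x*) + (μ/2)‖x_0 − x*‖²). -/

import Mathlib

open scoped RealInnerProductSpace

lemma nesterov_key (θ μ L fx1 fxk fy fs A B G ab ag bg : ℝ)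
    (hμ : 0 < μ) (hL : 0 < L) (hθ0 : 0 < θ) (hθ1 : θ ≤ 1) (hθ2 : θ ^ 2 * L = μ)
    (h1 : fx1 ≤ fy - 1 / (2 * L) * G)
    (h2 : fy + θ * (bg - ag) ≤ fxk)
    (h3 : fy - bg + μ / 2 * B ≤ fs)
    (h4 : 0 ≤ A + B - 2 * ab) :
    fx1 - fs + μ / 2 *
      ((1 - θ) ^ 2 * A + θ ^ 2 * B + (θ / μ) ^ 2 * G + 2 * (1 - θ) * θ * ab
        - 2 * (1 - θ) * (θ / μ) * ag - 2 * θ * (θ / μ) * bg)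
      ≤ (1 - θ) * (fxk - fs + μ / 2 * A) := by
  have hμ' : μ ≠ 0 := hμ.ne'
  have hL' : L ≠ 0 := hL.ne'
  have e1 : μ / 2 * ((θ / μ) ^ 2 * G) = 1 / (2 * L) * G := by
    field_simp
    linear_combination G * hθ2
  have e2 : μ / 2 * (2 * (1 - θ) * (θ / μ) * ag) = (1 - θ) * θ * ag := by
    field_simp
  have e3 : μ / 2 * (2 * θ * (θ / μ) * bg) = θ ^ 2 * bg := by
    field_simp
  have p2 : (1 - θ) * (fy + θ * (bg - ag)) ≤ (1 - θ) * fxk :=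
    mul_le_mul_of_nonneg_left h2 (by linarith)
  have p3 : θ * (fy - bg + μ / 2 * B) ≤ θ * fs :=
    mul_le_mul_of_nonneg_left h3 hθ0.le
  have p4 : 0 ≤ μ / 2 * θ * (1 - θ) * (A + B - 2 * ab) := by
    have h5 : (0:ℝ) ≤ μ / 2 * θ * (1 - θ) :=
      mul_nonneg (by positivity) (by linarith)
    exact mul_nonneg h5 h4
  nlinarith [h1, p2, p3, p4, e1, e2, e3]

lemma nesterov_expand {n : ℕ} (p q r : EuclideanSpace ℝ (Fin n)) (s t u : ℝ) :
    ‖s • p + t • q - u • r‖ ^ 2 =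
      s ^ 2 * ‖p‖ ^ 2 + t ^ 2 * ‖q‖ ^ 2 + u ^ 2 * ‖r‖ ^ 2 + 2 * s * t * ⟪p, q⟫
        - 2 * s * u * ⟪r, p⟫ - 2 * t * u * ⟪r, q⟫ := by
  rw [← real_inner_self_eq_norm_sq, ← real_inner_self_eq_norm_sq,
    ← real_inner_self_eq_norm_sq, ← real_inner_self_eq_norm_sq]
  simp only [inner_sub_left, inner_sub_right, inner_add_left, inner_add_right,
    real_inner_smul_left, real_inner_smul_right]
  linear_combination (-(s * t)) * real_inner_comm q p + (-(s * u)) * real_inner_comm r p + (-(t * u)) * real_inner_comm r q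

/-- Convergence rate of Nesterov's constant-step accelerated gradient method
for a μ-strongly convex, L-smooth function. -/
theorem nesterov_constant_step_convergence
    (n : ℕ) (f : EuclideanSpace ℝ (Fin n) → ℝ)
    (f' : EuclideanSpace ℝ (Fin n) → EuclideanSpace ℝ (Fin n))
    (hgrad : ∀ x, HasGradientAt f (f' x) x)
    (μ L : ℝ) (hμ : 0 < μ) (hμL : μ ≤ L)
    (hsc : ∀ x y : EuclideanSpace ℝ (Fin n),
      f x ≥ f y + ⟪f' y, x - y⟫ + μ / 2 * ‖x - y‖ ^ 2)
    (hsm : ∀ x y : EuclideanSpace ℝ (Fin n),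
      f x ≤ f y + ⟪f' y, x - y⟫ + L / 2 * ‖x - y‖ ^ 2)
    (xstar : EuclideanSpace ℝ (Fin n)) (hmin : ∀ x, f xstar ≤ f x)
    (β : ℝ) (hβ : β = (Real.sqrt L - Real.sqrt μ) / (Real.sqrt L + Real.sqrt μ))
    (x y : ℕ → EuclideanSpace ℝ (Fin n))
    (hy0 : y 0 = x 0)
    (hx : ∀ k : ℕ, x (k + 1) = y k - (1 / L) • f' (y k))
    (hy : ∀ k : ℕ, y (k + 1) = x (k + 1) + β • (x (k + 1) - x k)) :
    ∀ k : ℕ, f (x k) - f xstar ≤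
      (1 - Real.sqrt (μ / L)) ^ k *
        (f (x 0) - f xstar + μ / 2 * ‖x 0 - xstar‖ ^ 2) := by
  have hL : 0 < L := lt_of_lt_of_le hμ hμL
  have hq : 0 < μ / L := div_pos hμ hL
  set θ : ℝ := Real.sqrt (μ / L) with hθdef
  have hθ0 : 0 < θ := Real.sqrt_pos.mpr hq
  have hθne : θ ≠ 0 := hθ0.ne'
  have hμne : μ ≠ 0 := hμ.ne'
  have hLne : L ≠ 0 := hL.ne'
  have hθsq : θ ^ 2 = μ / L := Real.sq_sqrt hq.le
  have hθ2 : θ ^ 2 * L = μ := by rw [hθsq]; field_simp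
  have hθ1 : θ ≤ 1 := by
    rw [hθdef, show (1:ℝ) = Real.sqrt 1 by simp]
    exact Real.sqrt_le_sqrt (by rw [div_le_one hL]; exact hμL)
  -- β in terms of θ
  have hsL : 0 < Real.sqrt L := Real.sqrt_pos.mpr hL
  have hsLne : Real.sqrt L ≠ 0 := hsL.ne'
  have hsum : Real.sqrt L + Real.sqrt μ ≠ 0 := by positivity
  have hθeq : θ = Real.sqrt μ / Real.sqrt L := by
    rw [hθdef, Real.sqrt_div hμ.le]
  have h1θβ : (1 + θ) * β = 1 - θ := by
    rw [hβ, hθeq]; field_simp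
  -- the auxiliary sequence v
  set v : ℕ → EuclideanSpace ℝ (Fin n) := fun k =>
    match k with
    | 0 => x 0
    | (j+1) => x j + θ⁻¹ • (x (j+1) - x j) with hvdef
  have hv0 : v 0 = x 0 := rfl
  have hvs : ∀ k, v (k+1) = x k + θ⁻¹ • (x (k+1) - x k) := fun k => rfl
  -- relation between y, x, v
  have hrel : ∀ k, x k = (1 + θ) • y k - θ • v k := by
    intro k
    cases k with
    | zero =>
      rw [hy0, hv0]
      match_scalars <;> ring
    | succ k =>
      rw [hy k, hvs k]
      match_scalars <;> field_simp <;>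
        (first
          | ring1
          | linear_combination h1θβ
          | linear_combination -h1θβ
          | linear_combination (-(1+θ)) * h1θβ
          | linear_combination (1+θ) * h1θβ)
  -- the key recursion for v
  have hvstep : ∀ k, v (k+1) - xstar =
      (1 - θ) • (v k - xstar) + θ • (y k - xstar) - (θ / μ) • f' (y k) := by
    intro k
    rw [hvs k, hx k, hrel k]
    match_scalars <;> field_simp <;>
      (first
        | ring1
        | linear_combination hθ2
        | linear_combination (-1 : ℝ) * hθ2
        | linear_combination θ * hθ2
        | linear_combination (-θ) * hθ2)
  -- per-step potential decrease
  have hstep : ∀ k, f (x (k+1)) - f xstar + μ/2 * ‖v (k+1) - xstar‖^2 ≤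
      (1 - θ) * (f (x k) - f xstar + μ/2 * ‖v k - xstar‖^2) := by
    intro k
    set g := f' (y k) with hgdef
    set a := v k - xstar with hadef
    set b := y k - xstar with hbdef
    have h1 : f (x (k+1)) ≤ f (y k) - 1/(2*L) * ‖g‖^2 := by
      have hs := hsm (x (k+1)) (y k)
      have hd : x (k+1) - y k = -((1/L) • g) := by rw [hx k]; abel
      rw [hd] at hs
      have e1 : ⟪g, -((1/L) • g)⟫ = -(1/L) * ‖g‖^2 := by
        rw [inner_neg_right, real_inner_smul_right, real_inner_self_eq_norm_sq]; ring
      have e2 : ‖-((1/L) • g)‖^2 = (1/L)^2 * ‖g‖^2 := by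
        rw [norm_neg, norm_smul, Real.norm_eq_abs,
          abs_of_pos (by positivity : (0:ℝ) < 1/L)]
        ring
      rw [e1, e2] at hs
      have harith : -(1/L) * ‖g‖^2 + L/2 * ((1/L)^2 * ‖g‖^2) = -(1/(2*L)) * ‖g‖^2 := by
        field_simp; ring
      linarith
    have h2 : f (y k) + θ * (⟪g, b⟫ - ⟪g, a⟫) ≤ f (x k) := by
      have hs := hsc (x k) (y k)
      have hd : x k - y k = θ • (b - a) := by
        rw [hadef, hbdef, hrel k]
        match_scalars <;> ring
      have hip : ⟪g, x k - y k⟫ = θ * (⟪g, b⟫ - ⟪g, a⟫) := by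
        rw [hd, real_inner_smul_right, inner_sub_right]
      have hnn : (0:ℝ) ≤ μ/2 * ‖x k - y k‖^2 := by positivity
      rw [hip] at hs
      linarith
    have h3 : f (y k) - ⟪g, b⟫ + μ/2 * ‖b‖^2 ≤ f xstar := by
      have hs := hsc xstar (y k)
      have hd : xstar - y k = -b := by rw [hbdef]; abel
      rw [hd, inner_neg_right, norm_neg] at hs
      linarith
    have h4 : 0 ≤ ‖a‖^2 + ‖b‖^2 - 2*⟪a,b⟫ := by
      have he := norm_sub_sq_real a b
      nlinarith [sq_nonneg ‖a - b‖]
    have hnorm : ‖v (k+1) - xstar‖^2 =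
        (1-θ)^2 * ‖a‖^2 + θ^2 * ‖b‖^2 + (θ/μ)^2 * ‖g‖^2 + 2*(1-θ)*θ*⟪a,b⟫
          - 2*(1-θ)*(θ/μ)*⟪g,a⟫ - 2*θ*(θ/μ)*⟪g,b⟫ := by
      rw [hvstep k]
      exact nesterov_expand a b g (1-θ) θ (θ/μ)
    have key := nesterov_key θ μ L (f (x (k+1))) (f (x k)) (f (y k)) (f xstar)
      (‖a‖^2) (‖b‖^2) (‖g‖^2) ⟪a,b⟫ ⟪g,a⟫ ⟪g,b⟫
      hμ hL hθ0 hθ1 hθ2 h1 h2 h3 h4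
    rw [hnorm]
    linarith
  -- iterate
  have hθ1' : (0:ℝ) ≤ 1 - θ := by linarith
  have hiter : ∀ k, f (x k) - f xstar + μ/2 * ‖v k - xstar‖^2 ≤
      (1 - θ)^k * (f (x 0) - f xstar + μ/2 * ‖v 0 - xstar‖^2) := by
    intro k
    induction k with
    | zero => simp
    | succ k ih =>
      calc f (x (k+1)) - f xstar + μ/2 * ‖v (k+1) - xstar‖^2
          ≤ (1 - θ) * (f (x k) - f xstar + μ/2 * ‖v k - xstar‖^2) := hstep k
        _ ≤ (1 - θ) * ((1 - θ)^k * (f (x 0) - f xstar + μ/2 * ‖v 0 - xstar‖^2)) :=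
            mul_le_mul_of_nonneg_left ih hθ1'
        _ = (1 - θ)^(k+1) * (f (x 0) - f xstar + μ/2 * ‖v 0 - xstar‖^2) := by ring
  intro k
  have hit := hiter k
  rw [hv0] at hit
  have hnn : (0:ℝ) ≤ μ/2 * ‖v k - xstar‖^2 := by positivity
  linarith
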